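/- In the polynomial ring ℤ[x_1,...,x_n, y_1,...,y_l], the product ∏_{1≤i≤n} ∏_{1≤j≤l}(1 + x_i y_j) equals the sum over partitions λ contained in the n×l rectangle of s_λ(x_1,...,x_n)·s_{λᵀ}(y_1,...,y_l), where s_μ denotes the Schur polynomial and λᵀ the conjugate partition. -/

import Mathlib

open MvPolynomial

/-- The (finite) set of semistandard Young tableaux of shape `μ` (a partition with at
most `r` parts, each at most `c`), with entries in `{1,…,e}`, encoded as fillings of
the `r × c` rectangle by `{0,1,…,e}` that vanish outside the diagram of `μ`. -/
def ssytFinset (r c e : ℕ) (μ : Fin r → ℕ) : Finset (Fin r × Fin c → Fin (e + 1)) :=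
  Finset.univ.filter (fun T =>
    (∀ (i : Fin r) (j : Fin c), (j : ℕ) < μ i → 1 ≤ (T (i, j) : ℕ)) ∧
    (∀ (i : Fin r) (j : Fin c), ¬ (j : ℕ) < μ i → (T (i, j) : ℕ) = 0) ∧
    (∀ (i : Fin r) (j j' : Fin c), j ≤ j' → (j' : ℕ) < μ i → T (i, j) ≤ T (i, j')) ∧
    (∀ (i i' : Fin r) (j : Fin c), i < i' → (j : ℕ) < μ i' → (T (i, j) : ℕ) < (T (i', j) : ℕ)))

/-- The Schur polynomial `s_μ(x_1,…,x_e)`, defined as the generating polynomial of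
semistandard Young tableaux of shape `μ` with entries in `{1,…,e}`: the tableau `T`
contributes the monomial `∏_k x_k ^ (number of entries of T equal to k)`. -/
noncomputable def schurPoly (r c e : ℕ) (μ : Fin r → ℕ) : MvPolynomial (Fin e) ℤ :=
  ∑ T ∈ ssytFinset r c e μ,
    ∏ k : Fin e,
      X k ^ (Finset.univ.filter (fun p : Fin r × Fin c => (T p : ℕ) = (k : ℕ) + 1)).card

/-- The conjugate (transpose) partition: its `j`-th part is `#{i : μ i > j}`. -/
def conjPart {n : ℕ} (l : ℕ) (μ : Fin n → ℕ) : Fin l → ℕ :=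
  fun j => (Finset.univ.filter (fun i : Fin n => (j : ℕ) < μ i)).card

namespace DualCauchy

open Finset

/-! ### Basic combinatorial notions -/

def isAnti {r : ℕ} (μ : Fin r → ℕ) : Prop := ∀ i j : Fin r, i ≤ j → μ j ≤ μ i

instance {r : ℕ} : DecidablePred (isAnti (r := r)) := fun _ => by unfold isAnti; infer_instance

/-- `μ/ν` is a horizontal strip (`ν` inside `μ`, at most one box per column). -/
def hstrip {r : ℕ} (ν μ : Fin r → ℕ) : Prop :=
  (∀ i, ν i ≤ μ i) ∧ ∀ i j : Fin r, (j : ℕ) = (i : ℕ) + 1 → μ j ≤ ν i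

instance {r : ℕ} (ν μ : Fin r → ℕ) : Decidable (hstrip ν μ) := by unfold hstrip; infer_instance

/-- `lam/ρ` is a vertical strip (`ρ` inside `lam`, at most one box per row). -/
def vstrip {r : ℕ} (ρ lam : Fin r → ℕ) : Prop := ∀ i, ρ i ≤ lam i ∧ lam i ≤ ρ i + 1

instance {r : ℕ} (ρ lam : Fin r → ℕ) : Decidable (vstrip ρ lam) := by unfold vstrip; infer_instance

def wdiff {r : ℕ} (μ ν : Fin r → ℕ) : ℕ := ∑ i, (μ i - ν i)

def hstripsBelow {r : ℕ} (μ : Fin r → ℕ) : Finset (Fin r → ℕ) :=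
  (Fintype.piFinset fun i => Finset.Iic (μ i)).filter (fun ν => hstrip ν μ)

def vstripsBelow {r : ℕ} (μ : Fin r → ℕ) : Finset (Fin r → ℕ) :=
  (Fintype.piFinset fun i => Finset.Iic (μ i)).filter (fun ρ => isAnti ρ ∧ vstrip ρ μ)

def vstripsAbove {r : ℕ} (ρ : Fin r → ℕ) : Finset (Fin r → ℕ) :=
  (Fintype.piFinset fun i => Finset.Iic (ρ i + 1)).filter (fun lam => vstrip ρ lam)

/-- Generating function of chains of horizontal strips of length `e` from `∅` to `μ`
(equivalently, of SSYT of shape `μ` with entries `≤ e`). -/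
noncomputable def chainF {r : ℕ} : (e : ℕ) → (Fin r → ℕ) → MvPolynomial (Fin e) ℤ
  | 0, μ => if μ = 0 then 1 else 0
  | e + 1, μ => ∑ ν ∈ hstripsBelow μ,
      rename Fin.castSucc (chainF e ν) * X (Fin.last e) ^ wdiff μ ν

/-- Generating function of chains of vertical strips of length `m` from `∅` to `β`
(equivalently, of SSYT of shape `βᵀ` with entries `≤ m`). -/
noncomputable def chainG {n : ℕ} : (m : ℕ) → (Fin n → ℕ) → MvPolynomial (Fin m) ℤ
  | 0, β => if β = 0 then 1 else 0
  | m + 1, β => ∑ ρ ∈ vstripsBelow β,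
      rename Fin.castSucc (chainG m ρ) * X (Fin.last m) ^ wdiff β ρ

/-! ### Small helper lemmas -/

lemma isAnti_of_adj {r : ℕ} {μ : Fin r → ℕ}
    (h : ∀ i j : Fin r, (j : ℕ) = (i : ℕ) + 1 → μ j ≤ μ i) : isAnti μ := by
  have key : ∀ (d : ℕ) (i j : Fin r), (j : ℕ) = (i : ℕ) + d → μ j ≤ μ i := by
    intro d
    induction d with
    | zero => intro i j hj; have : j = i := Fin.ext (by omega); simp [this]
    | succ d ih =>
      intro i j hj
      have hd : (i : ℕ) + d < r := by omega
      exact le_trans (h ⟨(i : ℕ) + d, hd⟩ j (by simp only [Fin.val_mk]; omega))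
        (ih i ⟨(i : ℕ) + d, hd⟩ rfl)
  intro i j hij
  exact key ((j : ℕ) - (i : ℕ)) i j (by omega)

lemma hstrip_lower_anti {r : ℕ} {ν μ : Fin r → ℕ} (h : hstrip ν μ) : isAnti ν :=
  isAnti_of_adj (fun i j hj => le_trans (h.1 j) (h.2 i j hj))

lemma hstrip_upper_anti {r : ℕ} {ν μ : Fin r → ℕ} (h : hstrip ν μ) : isAnti μ :=
  isAnti_of_adj (fun i j hj => le_trans (h.2 i j hj) (h.1 i))

lemma isAnti_zero {r : ℕ} : isAnti (0 : Fin r → ℕ) := fun _ _ _ => le_refl _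

lemma chainF_not_anti {r e : ℕ} {μ : Fin r → ℕ} (h : ¬ isAnti μ) : chainF e μ = 0 := by
  cases e with
  | zero =>
    have : μ ≠ 0 := fun h0 => h (h0 ▸ isAnti_zero)
    simp [chainF, this]
  | succ e =>
    rw [chainF]
    refine Finset.sum_eq_zero fun ν hν => ?_
    exact absurd (hstrip_upper_anti (Finset.mem_filter.mp hν).2) h

lemma chainF_big {r : ℕ} : ∀ (e : ℕ) {μ : Fin r → ℕ} {i : Fin r},
    e ≤ (i : ℕ) → μ i ≠ 0 → chainF e μ = 0 := by
  intro e
  induction e with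
  | zero =>
    intro μ i _ hμ
    have : μ ≠ 0 := fun h0 => hμ (by simp [h0])
    simp [chainF, this]
  | succ e ih =>
    intro μ i hi hμ
    rw [chainF]
    refine Finset.sum_eq_zero fun ν hν => ?_
    have hs : hstrip ν μ := (Finset.mem_filter.mp hν).2
    have hd : (i : ℕ) - 1 < r := by omega
    have hν0 : ν ⟨(i : ℕ) - 1, hd⟩ ≠ 0 := by
      have := hs.2 ⟨(i : ℕ) - 1, hd⟩ i (by simp; omega)
      omega
    rw [ih (by simp; omega) hν0]
    simp

lemma chainG_big {n : ℕ} : ∀ (m : ℕ) {β : Fin n → ℕ} {i : Fin n},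
    m < β i → chainG m β = 0 := by
  intro m
  induction m with
  | zero =>
    intro β i h
    have : β ≠ 0 := fun h0 => by simp [h0] at h
    simp [chainG, this]
  | succ m ih =>
    intro β i h
    rw [chainG]
    refine Finset.sum_eq_zero fun ρ hρ => ?_
    have hs : vstrip ρ β := (Finset.mem_filter.mp hρ).2.2
    have : m < ρ i := by have := (hs i).2; omega
    rw [ih this]
    simp


lemma card_fin_lt (c m : ℕ) (h : m ≤ c) :
    ((Finset.univ : Finset (Fin c)).filter fun j : Fin c => (j : ℕ) < m).card = m := by
  rcases Nat.eq_or_lt_of_le h with h' | h'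
  · subst h'
    rw [Finset.filter_true_of_mem (fun j _ => j.isLt), Finset.card_univ, Fintype.card_fin]
  · have : ((Finset.univ : Finset (Fin c)).filter fun j : Fin c => (j : ℕ) < m) =
        Finset.Iio (⟨m, h'⟩ : Fin c) := by
      ext j
      simp [Finset.mem_Iio, Fin.lt_def]
    rw [this, Fin.card_Iio]

lemma downclosed_iff {c : ℕ} {s : Finset (Fin c)}
    (hdc : ∀ j j' : Fin c, j ≤ j' → j' ∈ s → j ∈ s) (j : Fin c) :
    j ∈ s ↔ (j : ℕ) < s.card := by
  constructor
  · intro hj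
    have hsub : Finset.Iic j ⊆ s := fun j' hj' => hdc j' j (Finset.mem_Iic.mp hj') hj
    have := Finset.card_le_card hsub
    rw [Fin.card_Iic] at this
    omega
  · intro hj
    by_contra hns
    have hsub : s ⊆ Finset.Iio j := by
      intro j' hj'
      rw [Finset.mem_Iio]
      by_contra hge
      exact hns (hdc j j' (not_lt.mp hge) hj')
    have := Finset.card_le_card hsub
    rw [Fin.card_Iio] at this
    omega

/-! ### The numerical core: a telescoping product identity -/

section Core

variable {S : Type*} [CommRing S] (x t : S) (a b : ℕ → ℕ)

noncomputable def Afac (k : ℕ) : S :=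
  ∑ j ∈ Finset.Icc (max (b (k + 1)) (a k - 1)) (min (a k) (b k)), x ^ (b k - j) * t ^ (a k - j)

noncomputable def Bfac (c k : ℕ) : S :=
  ∑ j ∈ Finset.Icc (max (a k) (b k)) (min (b k + 1) c), x ^ (j - a k) * t ^ (j - b k)

lemma coreAux (N : ℕ) (ha : ∀ k, a (k + 1) ≤ a k) (hb : ∀ k, b (k + 1) ≤ b k)
    (ha0 : ∀ k, N ≤ k + 1 → a k = 0) (hb0 : ∀ k, N ≤ k → b k = 0) :
    ∀ d m, m + d + 1 = N →
      (∀ c, b m + 1 ≤ c →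
        Bfac x t a b c m * ∏ k ∈ Finset.Ico (m + 1) N, Bfac x t a b (a (k - 1)) k =
          (1 + x * t) * ∏ k ∈ Finset.Ico m N, Afac x t a b k) ∧
      (a m ≤ b m →
        Bfac x t a b (b m) m * ∏ k ∈ Finset.Ico (m + 1) N, Bfac x t a b (a (k - 1)) k =
          ∏ k ∈ Finset.Ico m N, Afac x t a b k) := by
  have evalIcc : ∀ (u : ℕ) (f : ℕ → S), ∑ j ∈ Finset.Icc u u, f j = f u := by
    intro u f; rw [Finset.Icc_self, Finset.sum_singleton]
  have evalIcc2 : ∀ (u : ℕ) (f : ℕ → S), ∑ j ∈ Finset.Icc u (u + 1), f j = f u + f (u + 1) := by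
    intro u f
    rw [Finset.sum_Icc_succ_top (by omega), Finset.Icc_self, Finset.sum_singleton]
  have evalIcc2' : ∀ (u v : ℕ) (f : ℕ → S), v = u + 1 → ∑ j ∈ Finset.Icc u v, f j = f u + f v := by
    intro u v f hv; subst hv; exact evalIcc2 u f
  intro d
  induction d with
  | zero =>
    intro m hm
    have ham : a m = 0 := ha0 m (by omega)
    have hbm1 : b (m + 1) = 0 := hb0 (m + 1) (by omega)
    have hIco : Finset.Ico (m + 1) N = ∅ := by
      apply Finset.Ico_eq_empty; omega
    have hIco2 : Finset.Ico m N = {m} := by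
      ext k; simp only [Finset.mem_Ico, Finset.mem_singleton]; omega
    have hA : Afac x t a b m = x ^ b m := by
      unfold Afac
      rw [ham, hbm1]
      simp only [Nat.zero_sub, max_self, Nat.sub_zero]
      rw [show min 0 (b m) = 0 by omega, evalIcc]
      simp
    constructor
    · intro c hc
      have hB : Bfac x t a b c m = x ^ b m * (1 + x * t) := by
        unfold Bfac
        rw [ham]
        rw [show max 0 (b m) = b m by omega, show min (b m + 1) c = b m + 1 by omega]
        rw [evalIcc2]
        simp only [Nat.sub_zero, Nat.sub_self, pow_zero, mul_one]
        rw [show b m + 1 - b m = 1 by omega, pow_succ]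
        ring
      rw [hIco, hIco2, Finset.prod_empty, Finset.prod_singleton, hA, hB]
      ring
    · intro _
      have hB : Bfac x t a b (b m) m = x ^ b m := by
        unfold Bfac
        rw [ham]
        rw [show max 0 (b m) = b m by omega, show min (b m + 1) (b m) = b m by omega, evalIcc]
        simp
      rw [hIco, hIco2, Finset.prod_empty, Finset.prod_singleton, hA, hB]
      ring
  | succ d ih =>
    intro m hm
    obtain ⟨IH1, IH2⟩ := ih (m + 1) (by omega)
    have hsplitA : ∏ k ∈ Finset.Ico m N, Afac x t a b k =
        Afac x t a b m * ∏ k ∈ Finset.Ico (m + 1) N, Afac x t a b k :=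
      Finset.prod_eq_prod_Ico_succ_bot (by omega) _
    have hsplitB : ∏ k ∈ Finset.Ico (m + 1) N, Bfac x t a b (a (k - 1)) k =
        Bfac x t a b (a m) (m + 1) *
          ∏ k ∈ Finset.Ico (m + 2) N, Bfac x t a b (a (k - 1)) k := by
      rw [Finset.prod_eq_prod_Ico_succ_bot (by omega : m + 1 < N)]
      simp
    set A := a m with hA
    set B := b m with hB
    rcases lt_trichotomy (B + 1) A with hc | hc | hc
    · -- Case X : A > B + 1, both rows empty
      have hAfac : Afac x t a b m = 0 := by
        unfold Afac
        rw [Finset.Icc_eq_empty (by simp; omega), Finset.sum_empty]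
      have hBfac : ∀ c, Bfac x t a b c m = 0 := by
        intro c
        unfold Bfac
        rw [Finset.Icc_eq_empty (by simp; omega), Finset.sum_empty]
      constructor
      · intro c _; rw [hBfac, hsplitA, hAfac]; ring
      · intro hab; omega
    · -- Case Y : A = B + 1
      have hBB' : b (m + 1) ≤ B := hb m
      have hAfac : Afac x t a b m = t := by
        unfold Afac
        rw [show max (b (m + 1)) (A - 1) = B by omega, show min A B = B by omega, evalIcc]
        rw [show B - B = 0 by omega, show A - B = 1 by omega]
        ring
      have htail : Bfac x t a b (a m) (m + 1) *
          ∏ k ∈ Finset.Ico (m + 2) N, Bfac x t a b (a (k - 1)) k =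
          (1 + x * t) * ∏ k ∈ Finset.Ico (m + 1) N, Afac x t a b k := by
        refine IH1 (a m) ?_
        omega
      constructor
      · intro c hcc
        have hBfac : Bfac x t a b c m = t := by
          unfold Bfac
          rw [show max A B = A by omega, show min (B + 1) c = A by omega, evalIcc]
          rw [show A - A = 0 by omega, show A - B = 1 by omega]
          ring
        rw [hBfac, hsplitB, hsplitA, hAfac, htail]
        ring
      · intro hab; omega
    · -- Case Z : A ≤ B
      have hab : A ≤ B := by omega
      rcases lt_trichotomy A (b (m + 1)) with hz | hz | hz
      · -- Z1 : b (m+1) > A : everything vanishes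
        have hAfac : Afac x t a b m = 0 := by
          unfold Afac
          rw [Finset.Icc_eq_empty (by simp; omega), Finset.sum_empty]
        have hBtail : Bfac x t a b (a m) (m + 1) = 0 := by
          unfold Bfac
          refine Finset.sum_eq_zero fun j hj => ?_
          simp only [Finset.mem_Icc] at hj
          omega
        constructor
        · intro c _
          rw [hsplitB, hBtail, hsplitA, hAfac]; ring
        · intro _
          rw [hsplitB, hBtail, hsplitA, hAfac]; ring
      · -- Z2 : b (m+1) = A
        have hAfac : Afac x t a b m = x ^ (B - A) := by
          unfold Afac
          rw [show max (b (m + 1)) (A - 1) = A by omega, show min A B = A by omega, evalIcc]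
          rw [show A - A = 0 by omega]
          ring
        have htail : Bfac x t a b (a m) (m + 1) *
            ∏ k ∈ Finset.Ico (m + 2) N, Bfac x t a b (a (k - 1)) k =
            ∏ k ∈ Finset.Ico (m + 1) N, Afac x t a b k := by
          have := IH2 (by have := ha m; omega)
          rw [← hz] at this
          exact this
        constructor
        · intro c hcc
          have hBfac : Bfac x t a b c m = x ^ (B - A) * (1 + x * t) := by
            unfold Bfac
            rw [show max A B = B by omega, show min (B + 1) c = B + 1 by omega, evalIcc2]
            rw [show B - B = 0 by omega, show B + 1 - A = (B - A) + 1 by omega,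
              show B + 1 - B = 1 by omega, pow_succ]
            ring
          rw [hBfac, hsplitB, hsplitA, hAfac, htail]
          ring
        · intro _
          have hBfac : Bfac x t a b B m = x ^ (B - A) := by
            unfold Bfac
            rw [show max A B = B by omega, show min (B + 1) B = B by omega, evalIcc]
            rw [show B - B = 0 by omega]
            ring
          rw [hBfac, hsplitB, hsplitA, hAfac, htail]
      · -- Z3 : b (m+1) < A
        have hA1 : 1 ≤ A := by omega
        have hAfac : Afac x t a b m = x ^ (B - A) * (1 + x * t) := by
          unfold Afac
          rw [show max (b (m + 1)) (A - 1) = A - 1 by omega, show min A B = A by omega,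
            evalIcc2' (A - 1) A _ (by omega)]
          rw [show A - A = 0 by omega, show A - (A - 1) = 1 by omega,
            show B - (A - 1) = (B - A) + 1 by omega, pow_succ]
          ring
        have htail : Bfac x t a b (a m) (m + 1) *
            ∏ k ∈ Finset.Ico (m + 2) N, Bfac x t a b (a (k - 1)) k =
            (1 + x * t) * ∏ k ∈ Finset.Ico (m + 1) N, Afac x t a b k := by
          refine IH1 (a m) ?_
          omega
        constructor
        · intro c hcc
          have hBfac : Bfac x t a b c m = x ^ (B - A) * (1 + x * t) := by
            unfold Bfac
            rw [show max A B = B by omega, show min (B + 1) c = B + 1 by omega, evalIcc2]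
            rw [show B - B = 0 by omega, show B + 1 - A = (B - A) + 1 by omega,
              show B + 1 - B = 1 by omega, pow_succ]
            ring
          rw [hBfac, hsplitB, hsplitA, hAfac, htail]
          ring
        · intro _
          have hBfac : Bfac x t a b B m = x ^ (B - A) := by
            unfold Bfac
            rw [show max A B = B by omega, show min (B + 1) B = B by omega, evalIcc]
            rw [show B - B = 0 by omega]
            ring
          rw [hBfac, hsplitB, hsplitA, hAfac, htail]
          ring

lemma core (N : ℕ) (hN : 1 ≤ N) (ha : ∀ k, a (k + 1) ≤ a k) (hb : ∀ k, b (k + 1) ≤ b k)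
    (ha0 : ∀ k, N ≤ k + 1 → a k = 0) (hb0 : ∀ k, N ≤ k → b k = 0) :
    ∏ k ∈ Finset.range N, Bfac x t a b (if k = 0 then b 0 + 1 else a (k - 1)) k =
      (1 + x * t) * ∏ k ∈ Finset.range N, Afac x t a b k := by
  obtain ⟨H1, _⟩ := coreAux x t a b N ha hb ha0 hb0 (N - 1) 0 (by omega)
  have h0 := H1 (b 0 + 1) (le_refl _)
  rw [Finset.range_eq_Ico]
  rw [Finset.prod_eq_prod_Ico_succ_bot (by omega : 0 < N)]
  rw [if_pos rfl]
  calc Bfac x t a b (b 0 + 1) 0 *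
        ∏ k ∈ Finset.Ico (0 + 1) N, Bfac x t a b (if k = 0 then b 0 + 1 else a (k - 1)) k
      = Bfac x t a b (b 0 + 1) 0 * ∏ k ∈ Finset.Ico (0 + 1) N, Bfac x t a b (a (k - 1)) k := by
        congr 1
        refine Finset.prod_congr rfl fun k hk => ?_
        simp only [Finset.mem_Ico] at hk
        rw [if_neg (by omega)]
    _ = (1 + x * t) * ∏ k ∈ Finset.Ico 0 N, Afac x t a b k := h0


end Core

/-- The local (one new letter on each side) identity, in strip form. -/
lemma star {S : Type*} [CommRing S] (x t : S) {n : ℕ} (hn : 0 < n) (a b : Fin n → ℕ)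
    (ha : isAnti a) (hb : isAnti b) (halast : ∀ i : Fin n, (i : ℕ) + 1 = n → a i = 0) :
    ∑ lam ∈ (Fintype.piFinset fun i => Finset.Iic (b i + 1)).filter
        (fun lam => vstrip b lam ∧ hstrip a lam),
      ((∏ i, x ^ (lam i - a i)) * ∏ i, t ^ (lam i - b i)) =
    (1 + x * t) * ∑ g ∈ (Fintype.piFinset fun i => Finset.Iic (b i)).filter
        (fun g => hstrip g b ∧ vstrip g a),
      ((∏ i, x ^ (b i - g i)) * ∏ i, t ^ (a i - g i)) := by
  classical
  obtain ⟨cap, hcap⟩ : ∃ cap : Fin n → ℕ, ∀ i : Fin n,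
      cap i = if _ : 0 < (i : ℕ) then a ⟨(i : ℕ) - 1, lt_of_le_of_lt (Nat.sub_le _ _) i.isLt⟩
      else b i + 1 := ⟨_, fun _ => rfl⟩
  obtain ⟨bnx, hbnx⟩ : ∃ bnx : Fin n → ℕ, ∀ i : Fin n,
      bnx i = if h : (i : ℕ) + 1 < n then b ⟨(i : ℕ) + 1, h⟩ else 0 := ⟨_, fun _ => rfl⟩
  obtain ⟨a', ha'⟩ : ∃ a' : ℕ → ℕ, ∀ k : ℕ,
      a' k = if h : k < n then a ⟨k, h⟩ else 0 := ⟨_, fun _ => rfl⟩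
  obtain ⟨b', hb'⟩ : ∃ b' : ℕ → ℕ, ∀ k : ℕ,
      b' k = if h : k < n then b ⟨k, h⟩ else 0 := ⟨_, fun _ => rfl⟩
  have ha'v : ∀ i : Fin n, a' (i : ℕ) = a i := fun i => by
    rw [ha' (i : ℕ), dif_pos i.isLt, Fin.eta]
  have hb'v : ∀ i : Fin n, b' (i : ℕ) = b i := fun i => by
    rw [hb' (i : ℕ), dif_pos i.isLt, Fin.eta]
  have hL : (Fintype.piFinset fun i => Finset.Iic (b i + 1)).filter
        (fun lam => vstrip b lam ∧ hstrip a lam) =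
      Fintype.piFinset (fun i : Fin n =>
        Finset.Icc (max (a i) (b i)) (min (b i + 1) (cap i))) := by
    ext lam
    simp only [Finset.mem_filter, Fintype.mem_piFinset, Finset.mem_Iic, Finset.mem_Icc]
    constructor
    · rintro ⟨h1, h2, h3⟩ i
      refine ⟨max_le (h3.1 i) (h2 i).1, le_min (h2 i).2 ?_⟩
      rw [hcap i]
      by_cases hpos : 0 < (i : ℕ)
      · rw [dif_pos hpos]
        exact h3.2 _ i (by simp only [Fin.val_mk]; omega)
      · rw [dif_neg hpos]
        exact (h2 i).2
    · intro h
      refine ⟨fun i => (le_min_iff.mp (h i).2).1,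
        ⟨fun i => ⟨le_trans (le_max_right _ _) (h i).1, (le_min_iff.mp (h i).2).1⟩,
         ⟨fun i => le_trans (le_max_left _ _) (h i).1, ?_⟩⟩⟩
      intro i j hj
      have h2 := (le_min_iff.mp (h j).2).2
      rw [hcap j, dif_pos (show 0 < (j : ℕ) by omega)] at h2
      refine le_trans h2 (le_of_eq ?_)
      congr 1
      exact Fin.ext (by simp only [Fin.val_mk]; omega)
  have hR : (Fintype.piFinset fun i => Finset.Iic (b i)).filter
        (fun g => hstrip g b ∧ vstrip g a) =
      Fintype.piFinset (fun i : Fin n =>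
        Finset.Icc (max (bnx i) (a i - 1)) (min (a i) (b i))) := by
    ext g
    simp only [Finset.mem_filter, Fintype.mem_piFinset, Finset.mem_Iic, Finset.mem_Icc]
    constructor
    · rintro ⟨h1, h2, h3⟩ i
      refine ⟨max_le ?_ (by have := (h3 i).2; omega), le_min (h3 i).1 (h2.1 i)⟩
      rw [hbnx i]
      by_cases hi : (i : ℕ) + 1 < n
      · rw [dif_pos hi]
        exact h2.2 i _ (by simp only [Fin.val_mk])
      · rw [dif_neg hi]; exact Nat.zero_le _
    · intro h
      refine ⟨fun i => (le_min_iff.mp (h i).2).2,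
        ⟨⟨fun i => (le_min_iff.mp (h i).2).2, ?_⟩,
         fun i => ⟨(le_min_iff.mp (h i).2).1,
           by have := le_trans (le_max_right _ _) (h i).1; omega⟩⟩⟩
      intro i j hj
      have h1 := le_trans (le_max_left _ _) (h i).1
      rw [hbnx i, dif_pos (show (i : ℕ) + 1 < n by omega)] at h1
      refine le_trans (le_of_eq ?_) h1
      congr 1
      exact Fin.ext (by simp only [Fin.val_mk]; omega)
  rw [hL, hR]
  have hsum1 : ∑ lam ∈ Fintype.piFinset (fun i : Fin n =>
        Finset.Icc (max (a i) (b i)) (min (b i + 1) (cap i))),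
      ((∏ i, x ^ (lam i - a i)) * ∏ i, t ^ (lam i - b i)) =
      ∏ i : Fin n, ∑ j ∈ Finset.Icc (max (a i) (b i)) (min (b i + 1) (cap i)),
        x ^ (j - a i) * t ^ (j - b i) := by
    rw [Finset.prod_univ_sum]
    exact Finset.sum_congr rfl fun lam _ => (Finset.prod_mul_distrib).symm
  have hsum2 : ∑ g ∈ Fintype.piFinset (fun i : Fin n =>
        Finset.Icc (max (bnx i) (a i - 1)) (min (a i) (b i))),
      ((∏ i, x ^ (b i - g i)) * ∏ i, t ^ (a i - g i)) =
      ∏ i : Fin n, ∑ j ∈ Finset.Icc (max (bnx i) (a i - 1)) (min (a i) (b i)),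
        x ^ (b i - j) * t ^ (a i - j) := by
    rw [Finset.prod_univ_sum]
    exact Finset.sum_congr rfl fun g _ => (Finset.prod_mul_distrib).symm
  rw [hsum1, hsum2]
  have hb'succ : ∀ i : Fin n, b' ((i : ℕ) + 1) = bnx i := by
    intro i
    rw [hb' ((i : ℕ) + 1), hbnx i]
  have hcap2 : ∀ i : Fin n, (if (i : ℕ) = 0 then b' 0 + 1 else a' ((i : ℕ) - 1)) = cap i := by
    intro i
    by_cases hi : (i : ℕ) = 0
    · rw [if_pos hi, hcap i, dif_neg (by omega : ¬ 0 < (i : ℕ)), hb' 0, dif_pos hn]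
      congr 2
      exact Fin.ext (by simp [hi])
    · rw [if_neg hi, hcap i, dif_pos (by omega : 0 < (i : ℕ)),
        ha' ((i : ℕ) - 1), dif_pos (lt_of_le_of_lt (Nat.sub_le _ _) i.isLt)]
  have hBconv : ∀ i : Fin n,
      (∑ j ∈ Finset.Icc (max (a i) (b i)) (min (b i + 1) (cap i)),
        x ^ (j - a i) * t ^ (j - b i)) =
      Bfac x t a' b' (if (i : ℕ) = 0 then b' 0 + 1 else a' ((i : ℕ) - 1)) (i : ℕ) := by
    intro i
    unfold Bfac
    rw [ha'v i, hb'v i, hcap2 i]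
  have hAconv : ∀ i : Fin n,
      (∑ j ∈ Finset.Icc (max (bnx i) (a i - 1)) (min (a i) (b i)),
        x ^ (b i - j) * t ^ (a i - j)) = Afac x t a' b' (i : ℕ) := by
    intro i
    unfold Afac
    rw [ha'v i, hb'v i, hb'succ i]
  have ha'anti : ∀ k, a' (k + 1) ≤ a' k := by
    intro k
    rw [ha' (k + 1), ha' k]
    by_cases h1 : k + 1 < n
    · rw [dif_pos h1, dif_pos (by omega : k < n)]
      exact ha ⟨k, by omega⟩ ⟨k + 1, h1⟩ (by rw [Fin.mk_le_mk]; omega)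
    · rw [dif_neg h1]; exact Nat.zero_le _
  have hb'anti : ∀ k, b' (k + 1) ≤ b' k := by
    intro k
    rw [hb' (k + 1), hb' k]
    by_cases h1 : k + 1 < n
    · rw [dif_pos h1, dif_pos (by omega : k < n)]
      exact hb ⟨k, by omega⟩ ⟨k + 1, h1⟩ (by rw [Fin.mk_le_mk]; omega)
    · rw [dif_neg h1]; exact Nat.zero_le _
  have ha'0 : ∀ k, n ≤ k + 1 → a' k = 0 := by
    intro k hk
    rw [ha' k]
    by_cases h : k < n
    · rw [dif_pos h]
      exact halast ⟨k, h⟩ (by simp only [Fin.val_mk]; omega)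
    · rw [dif_neg h]
  have hb'0 : ∀ k, n ≤ k → b' k = 0 := by
    intro k hk
    rw [hb' k, dif_neg (by omega)]
  calc ∏ i : Fin n, ∑ j ∈ Finset.Icc (max (a i) (b i)) (min (b i + 1) (cap i)),
        x ^ (j - a i) * t ^ (j - b i)
      = ∏ k ∈ Finset.range n, Bfac x t a' b' (if k = 0 then b' 0 + 1 else a' (k - 1)) k := by
        rw [← Fin.prod_univ_eq_prod_range
          (fun k => Bfac x t a' b' (if k = 0 then b' 0 + 1 else a' (k - 1)) k) n]
        exact Finset.prod_congr rfl fun i _ => hBconv i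
    _ = (1 + x * t) * ∏ k ∈ Finset.range n, Afac x t a' b' k :=
        core x t a' b' n hn ha'anti hb'anti ha'0 hb'0
    _ = (1 + x * t) * ∏ i : Fin n, ∑ j ∈ Finset.Icc (max (bnx i) (a i - 1)) (min (a i) (b i)),
          x ^ (b i - j) * t ^ (a i - j) := by
        congr 1
        rw [← Fin.prod_univ_eq_prod_range (fun k => Afac x t a' b' k) n]
        exact (Finset.prod_congr rfl fun i _ => hAconv i).symm

/-! ### Branching rule for `schurPoly` -/

lemma schur_zero {r c : ℕ} {μ : Fin r → ℕ} (hμc : ∀ i, μ i ≤ c) :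
    schurPoly r c 0 μ = if μ = 0 then 1 else 0 := by
  unfold schurPoly
  by_cases h0 : μ = 0
  · subst h0
    rw [if_pos rfl]
    have hsing : ssytFinset r c 0 0 = {fun _ => 0} := by
      ext T
      rw [ssytFinset, Finset.mem_filter]
      simp only [Finset.mem_univ, true_and, Finset.mem_singleton]
      constructor
      · rintro ⟨h1, h2, h3, h4⟩
        funext p
        exact Fin.ext (by simpa using h2 p.1 p.2 (by simp))
      · intro hT
        subst hT
        exact ⟨fun i j hj => by simp at hj, fun i j _ => rfl,
          fun i j j' _ _ => le_refl _, fun i i' j _ hj => by simp at hj⟩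
    rw [hsing, Finset.sum_singleton]
    simp
  · rw [if_neg h0]
    have hempty : ssytFinset r c 0 μ = ∅ := by
      rw [Finset.eq_empty_iff_forall_notMem]
      intro T hT
      rw [ssytFinset, Finset.mem_filter] at hT
      obtain ⟨i, hi⟩ := Function.ne_iff.mp h0
      simp only [Pi.zero_apply] at hi
      have hjlt : 0 < c := lt_of_lt_of_le (by omega) (hμc i)
      have h1 := hT.2.1 i ⟨0, hjlt⟩ (by simp only [Fin.val_mk]; omega)
      have h2 := (T (i, ⟨0, hjlt⟩)).isLt
      omega
    rw [hempty, Finset.sum_empty]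

lemma schur_branch {r c e : ℕ} {μ : Fin r → ℕ} (hμ : isAnti μ) (hμc : ∀ i, μ i ≤ c) :
    schurPoly r c (e + 1) μ =
      ∑ ν ∈ hstripsBelow μ,
        rename Fin.castSucc (schurPoly r c e ν) * X (Fin.last e) ^ wdiff μ ν := by
  classical
  have hcross : ∀ {ν : Fin r → ℕ}, hstrip ν μ → ∀ i i' : Fin r, i < i' → μ i' ≤ ν i := by
    intro ν hs i i' hii
    rw [Fin.lt_def] at hii
    have h1 : (i : ℕ) + 1 < r := lt_of_le_of_lt hii i'.isLt
    refine le_trans (hμ ⟨(i : ℕ) + 1, h1⟩ i' ?_) (hs.2 i ⟨(i : ℕ) + 1, h1⟩ (by simp))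
    rw [Fin.le_def]
    simp only [Fin.val_mk]
    omega
  obtain ⟨nu, hnu⟩ : ∃ nu : (Fin r × Fin c → Fin (e + 2)) → Fin r → ℕ, ∀ T i,
      nu T i = (Finset.univ.filter fun j : Fin c =>
        (j : ℕ) < μ i ∧ (T (i, j) : ℕ) ≤ e).card := ⟨_, fun _ _ => rfl⟩
  obtain ⟨tr, htr⟩ : ∃ tr : (Fin r × Fin c → Fin (e + 2)) → (Fin r × Fin c → Fin (e + 1)),
      ∀ T p, (tr T p : ℕ) = if (T p : ℕ) ≤ e then (T p : ℕ) else 0 := by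
    refine ⟨fun T p => if h : (T p : ℕ) ≤ e then ⟨(T p : ℕ), by omega⟩
      else ⟨0, by omega⟩, ?_⟩
    intro T p
    simp only []
    by_cases h : (T p : ℕ) ≤ e
    · rw [dif_pos h, if_pos h]
    · rw [dif_neg h, if_neg h]
  obtain ⟨bw, hbw⟩ : ∃ bw : (Fin r → ℕ) → (Fin r × Fin c → Fin (e + 1)) →
      (Fin r × Fin c → Fin (e + 2)), ∀ ν T' p, (bw ν T' p : ℕ) =
        if (p.2 : ℕ) < ν p.1 then (T' p : ℕ) else if (p.2 : ℕ) < μ p.1 then e + 1 else 0 := by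
    refine ⟨fun ν T' p => if h1 : (p.2 : ℕ) < ν p.1 then
        ⟨(T' p : ℕ), lt_trans (T' p).isLt (Nat.lt_succ_self _)⟩
      else if h2 : (p.2 : ℕ) < μ p.1 then ⟨e + 1, Nat.lt_succ_self _⟩
      else ⟨0, Nat.succ_pos _⟩, ?_⟩
    intro ν T' p
    simp only []
    by_cases h1 : (p.2 : ℕ) < ν p.1
    · rw [dif_pos h1, if_pos h1]
    · rw [dif_neg h1, if_neg h1]
      by_cases h2 : (p.2 : ℕ) < μ p.1
      · rw [dif_pos h2, if_pos h2]
      · rw [dif_neg h2, if_neg h2]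
  have initseg : ∀ T, T ∈ ssytFinset r c (e + 1) μ → ∀ (i : Fin r) (j : Fin c),
      ((j : ℕ) < nu T i ↔ ((j : ℕ) < μ i ∧ (T (i, j) : ℕ) ≤ e)) := by
    intro T hT i j
    rw [ssytFinset, Finset.mem_filter] at hT
    obtain ⟨-, h1, h2, h3, h4⟩ := hT
    have hdc : ∀ j j' : Fin c, j ≤ j' →
        j' ∈ (Finset.univ.filter fun j' : Fin c => (j' : ℕ) < μ i ∧ (T (i, j') : ℕ) ≤ e) →
        j ∈ (Finset.univ.filter fun j' : Fin c => (j' : ℕ) < μ i ∧ (T (i, j') : ℕ) ≤ e) := by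
      intro j j' hjj hj'
      simp only [Finset.mem_filter, Finset.mem_univ, true_and] at hj' ⊢
      obtain ⟨ha, hb⟩ := hj'
      have hrow := h3 i j j' hjj ha
      rw [Fin.le_def] at hrow
      have hjj' : (j : ℕ) ≤ (j' : ℕ) := hjj
      exact ⟨lt_of_le_of_lt hjj' ha, le_trans hrow hb⟩
    rw [hnu]
    constructor
    · intro hlt
      have hj := (downclosed_iff hdc j).mpr hlt
      simpa using hj
    · intro hcond
      exact (downclosed_iff hdc j).mp (by simpa using hcond)
  have hνle : ∀ T, T ∈ ssytFinset r c (e + 1) μ → ∀ i, nu T i ≤ μ i := by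
    intro T hT i
    rw [hnu]
    calc (Finset.univ.filter fun j : Fin c => (j : ℕ) < μ i ∧ (T (i, j) : ℕ) ≤ e).card
        ≤ (Finset.univ.filter fun j : Fin c => (j : ℕ) < μ i).card :=
          Finset.card_le_card (fun j hj => by
            simp only [Finset.mem_filter, Finset.mem_univ, true_and] at hj ⊢
            exact hj.1)
      _ = μ i := card_fin_lt c (μ i) (hμc i)
  have hνstrip : ∀ T, T ∈ ssytFinset r c (e + 1) μ → hstrip (nu T) μ := by
    intro T hT
    refine ⟨hνle T hT, ?_⟩
    intro i i' hi'
    have hii : i < i' := by rw [Fin.lt_def]; omega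
    have hTm := hT
    rw [ssytFinset, Finset.mem_filter] at hTm
    obtain ⟨-, h1, h2, h3, h4⟩ := hTm
    rw [hnu]
    have hsub : (Finset.univ.filter fun j : Fin c => (j : ℕ) < μ i') ⊆
        (Finset.univ.filter fun j : Fin c => (j : ℕ) < μ i ∧ (T (i, j) : ℕ) ≤ e) := by
      intro j hj
      simp only [Finset.mem_filter, Finset.mem_univ, true_and] at hj ⊢
      have hcol := h4 i i' j hii hj
      have hlt2 := (T (i', j)).isLt
      exact ⟨lt_of_lt_of_le hj (hμ i i' (le_of_lt hii)), by omega⟩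
    calc μ i' = (Finset.univ.filter fun j : Fin c => (j : ℕ) < μ i').card :=
          (card_fin_lt c (μ i') (hμc i')).symm
      _ ≤ _ := Finset.card_le_card hsub
  have rowcount : ∀ T, T ∈ ssytFinset r c (e + 1) μ → ∀ i,
      (Finset.univ.filter fun j : Fin c => (T (i, j) : ℕ) = e + 1).card = μ i - nu T i := by
    intro T hT i
    have hTm := hT
    rw [ssytFinset, Finset.mem_filter] at hTm
    obtain ⟨-, h1, h2, h3, h4⟩ := hTm
    have hfe : (Finset.univ.filter fun j : Fin c => (T (i, j) : ℕ) = e + 1) =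
        (Finset.univ.filter fun j : Fin c => nu T i ≤ (j : ℕ) ∧ (j : ℕ) < μ i) := by
      ext j
      simp only [Finset.mem_filter, Finset.mem_univ, true_and]
      constructor
      · intro hval
        have hin : (j : ℕ) < μ i := by
          by_contra hout
          have h0 := h2 i j hout
          omega
        refine ⟨?_, hin⟩
        by_contra hjn
        push_neg at hjn
        have := ((initseg T hT i j).mp hjn).2
        omega
      · rintro ⟨hge, hlt⟩
        have hno : ¬ ((j : ℕ) < μ i ∧ (T (i, j) : ℕ) ≤ e) := by
          intro hcontra
          have := (initseg T hT i j).mpr hcontra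
          omega
        push_neg at hno
        have h1' := h1 i j hlt
        have h2' := (T (i, j)).isLt
        have := hno hlt
        omega
    rw [hfe]
    have hdecomp : (Finset.univ.filter fun j : Fin c => (j : ℕ) < μ i) =
        (Finset.univ.filter fun j : Fin c => (j : ℕ) < nu T i) ∪
        (Finset.univ.filter fun j : Fin c => nu T i ≤ (j : ℕ) ∧ (j : ℕ) < μ i) := by
      ext j
      simp only [Finset.mem_union, Finset.mem_filter, Finset.mem_univ, true_and]
      have := hνle T hT i
      omega
    have hdisj : Disjoint (Finset.univ.filter fun j : Fin c => (j : ℕ) < nu T i)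
        (Finset.univ.filter fun j : Fin c => nu T i ≤ (j : ℕ) ∧ (j : ℕ) < μ i) := by
      rw [Finset.disjoint_left]
      intro j hj1 hj2
      simp only [Finset.mem_filter, Finset.mem_univ, true_and] at hj1 hj2
      omega
    have hcards := congrArg Finset.card hdecomp
    rw [Finset.card_union_of_disjoint hdisj, card_fin_lt c (μ i) (hμc i),
      card_fin_lt c (nu T i) (le_trans (hνle T hT i) (hμc i))] at hcards
    omega
  have totcount : ∀ T : Fin r × Fin c → Fin (e + 2),
      (Finset.univ.filter fun p : Fin r × Fin c => (T p : ℕ) = e + 1).card =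
        ∑ i : Fin r, (Finset.univ.filter fun j : Fin c => (T (i, j) : ℕ) = e + 1).card := by
    intro T
    rw [Finset.card_filter, Fintype.sum_prod_type]
    exact Finset.sum_congr rfl fun i _ => (Finset.card_filter _ _).symm
  have htrmem : ∀ T, T ∈ ssytFinset r c (e + 1) μ → tr T ∈ ssytFinset r c e (nu T) := by
    intro T hT
    have hTm := hT
    rw [ssytFinset, Finset.mem_filter] at hTm
    obtain ⟨-, h1, h2, h3, h4⟩ := hTm
    rw [ssytFinset, Finset.mem_filter]
    refine ⟨Finset.mem_univ _, ?_, ?_, ?_, ?_⟩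
    · intro i j hj
      obtain ⟨hμj, hle⟩ := (initseg T hT i j).mp hj
      rw [htr, if_pos hle]
      exact h1 i j hμj
    · intro i j hj
      rw [htr]
      by_cases hle : (T (i, j) : ℕ) ≤ e
      · by_cases hμj : (j : ℕ) < μ i
        · exact absurd ((initseg T hT i j).mpr ⟨hμj, hle⟩) hj
        · rw [if_pos hle]; exact h2 i j hμj
      · rw [if_neg hle]
    · intro i j j' hjj hj'
      obtain ⟨hμj', hle'⟩ := (initseg T hT i j').mp hj'
      have hjj' : (j : ℕ) ≤ (j' : ℕ) := hjj
      have hj : (j : ℕ) < nu T i := by omega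
      obtain ⟨hμj, hle⟩ := (initseg T hT i j).mp hj
      rw [Fin.le_def, htr, htr, if_pos hle, if_pos hle']
      have hrow := h3 i j j' hjj hμj'
      rw [Fin.le_def] at hrow
      exact hrow
    · intro i i' j hii hj
      obtain ⟨hμj, hle⟩ := (initseg T hT i' j).mp hj
      have hcol := h4 i i' j hii hμj
      have hjlow := (initseg T hT i j).mpr
        ⟨lt_of_lt_of_le hμj (hμ i i' (le_of_lt hii)), by omega⟩
      rw [htr, htr, if_pos (by omega : (T (i, j) : ℕ) ≤ e), if_pos hle]
      exact hcol
  have hbwmem : ∀ ν, ν ∈ hstripsBelow μ → ∀ T', T' ∈ ssytFinset r c e ν →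
      bw ν T' ∈ ssytFinset r c (e + 1) μ := by
    intro ν hν T' hT'
    rw [hstripsBelow, Finset.mem_filter] at hν
    obtain ⟨hνle', hνs⟩ := hν
    have hνμ : ∀ i, ν i ≤ μ i := hνs.1
    have hνanti : isAnti ν := hstrip_lower_anti hνs
    rw [ssytFinset, Finset.mem_filter] at hT'
    obtain ⟨-, g1, g2, g3, g4⟩ := hT'
    rw [ssytFinset, Finset.mem_filter]
    refine ⟨Finset.mem_univ _, ?_, ?_, ?_, ?_⟩
    · intro i j hj
      rw [hbw]
      by_cases h1 : (j : ℕ) < ν i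
      · rw [if_pos h1]; exact g1 i j h1
      · rw [if_neg h1, if_pos hj]; omega
    · intro i j hj
      rw [hbw]
      have h1 : ¬ (j : ℕ) < ν i := fun hc => hj (lt_of_lt_of_le hc (hνμ i))
      rw [if_neg h1, if_neg hj]
    · intro i j j' hjj hj'
      rw [Fin.le_def, hbw, hbw]
      have hjj' : (j : ℕ) ≤ (j' : ℕ) := hjj
      by_cases h1' : (j' : ℕ) < ν i
      · have h1 : (j : ℕ) < ν i := by omega
        rw [if_pos h1, if_pos h1']
        have := g3 i j j' hjj h1'
        rw [Fin.le_def] at this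
        exact this
      · rw [if_neg h1', if_pos hj']
        by_cases h1 : (j : ℕ) < ν i
        · rw [if_pos h1]
          have := (T' (i, j)).isLt
          omega
        · rw [if_neg h1, if_pos (by omega : (j : ℕ) < μ i)]
    · intro i i' j hii hj
      rw [hbw, hbw]
      by_cases h1' : (j : ℕ) < ν i'
      · have h1 : (j : ℕ) < ν i := lt_of_lt_of_le h1' (hνanti i i' (le_of_lt hii))
        rw [if_pos h1, if_pos h1']
        exact g4 i i' j hii h1'
      · have h1 : (j : ℕ) < ν i := lt_of_lt_of_le hj (hcross hνs i i' hii)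
        rw [if_pos h1, if_neg h1', if_pos hj]
        have := (T' (i, j)).isLt
        omega
  have hleft : ∀ T, T ∈ ssytFinset r c (e + 1) μ → bw (nu T) (tr T) = T := by
    intro T hT
    have hTm := hT
    rw [ssytFinset, Finset.mem_filter] at hTm
    obtain ⟨-, h1, h2, h3, h4⟩ := hTm
    funext p
    apply Fin.ext
    rw [hbw]
    by_cases hj : ((p.2 : ℕ)) < nu T p.1
    · rw [if_pos hj, htr]
      obtain ⟨hμj, hle⟩ := (initseg T hT p.1 p.2).mp hj
      have hle' : (T p : ℕ) ≤ e := hle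
      rw [if_pos hle']
    · rw [if_neg hj]
      by_cases hμj : (p.2 : ℕ) < μ p.1
      · rw [if_pos hμj]
        have hnotle : ¬ (T p : ℕ) ≤ e :=
          fun hc => hj ((initseg T hT p.1 p.2).mpr ⟨hμj, hc⟩)
        have := (T p).isLt
        omega
      · rw [if_neg hμj]
        have h0 : (T p : ℕ) = 0 := h2 p.1 p.2 hμj
        omega
  have hright1 : ∀ ν, ν ∈ hstripsBelow μ → ∀ T', T' ∈ ssytFinset r c e ν →
      nu (bw ν T') = ν := by
    intro ν hν T' hT'
    rw [hstripsBelow, Finset.mem_filter] at hν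
    obtain ⟨hνle', hνs⟩ := hν
    rw [ssytFinset, Finset.mem_filter] at hT'
    obtain ⟨-, g1, g2, g3, g4⟩ := hT'
    funext i
    rw [hnu]
    have hfeq : (Finset.univ.filter fun j : Fin c =>
        (j : ℕ) < μ i ∧ (bw ν T' (i, j) : ℕ) ≤ e) =
        (Finset.univ.filter fun j : Fin c => (j : ℕ) < ν i) := by
      ext j
      simp only [Finset.mem_filter, Finset.mem_univ, true_and]
      rw [hbw]
      constructor
      · rintro ⟨hμj, hle⟩
        by_contra hc
        rw [if_neg hc, if_pos hμj] at hle
        omega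
      · intro hc
        refine ⟨lt_of_lt_of_le hc (hνs.1 i), ?_⟩
        rw [if_pos hc]
        have := (T' (i, j)).isLt
        omega
    rw [hfeq, card_fin_lt c (ν i) (le_trans (hνs.1 i) (hμc i))]
  have hright2 : ∀ ν, ν ∈ hstripsBelow μ → ∀ T', T' ∈ ssytFinset r c e ν →
      tr (bw ν T') = T' := by
    intro ν hν T' hT'
    rw [ssytFinset, Finset.mem_filter] at hT'
    obtain ⟨-, g1, g2, g3, g4⟩ := hT'
    funext p
    apply Fin.ext
    rw [htr, hbw]
    by_cases h1 : (p.2 : ℕ) < ν p.1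
    · rw [if_pos h1]
      have := (T' p).isLt
      rw [if_pos (by omega)]
    · rw [if_neg h1]
      by_cases h2 : (p.2 : ℕ) < μ p.1
      · rw [if_pos h2, if_neg (by omega)]
        have h0 : (T' p : ℕ) = 0 := g2 p.1 p.2 h1
        omega
      · rw [if_neg h2, if_pos (by omega)]
        have h0 : (T' p : ℕ) = 0 := g2 p.1 p.2 h1
        omega
  have hren : ∀ ν : Fin r → ℕ, rename (Fin.castSucc : Fin e → Fin (e + 1))
      (schurPoly r c e ν) = ∑ T' ∈ ssytFinset r c e ν, ∏ k : Fin e,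
        (X (Fin.castSucc k) : MvPolynomial (Fin (e + 1)) ℤ) ^
          (Finset.univ.filter fun p : Fin r × Fin c => (T' p : ℕ) = (k : ℕ) + 1).card := by
    intro ν
    unfold schurPoly
    rw [map_sum]
    refine Finset.sum_congr rfl fun T' _ => ?_
    rw [map_prod]
    refine Finset.prod_congr rfl fun k _ => ?_
    rw [map_pow, rename_X]
  have hRHS : ∑ ν ∈ hstripsBelow μ,
      rename Fin.castSucc (schurPoly r c e ν) * X (Fin.last e) ^ wdiff μ ν =
      ∑ p ∈ (hstripsBelow μ).sigma (fun ν : Fin r → ℕ => ssytFinset r c e ν),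
        (∏ k : Fin e, (X (Fin.castSucc k) : MvPolynomial (Fin (e + 1)) ℤ) ^
          (Finset.univ.filter fun q : Fin r × Fin c => (p.2 q : ℕ) = (k : ℕ) + 1).card) *
          X (Fin.last e) ^ wdiff μ p.1 := by
    rw [Finset.sum_sigma]
    refine Finset.sum_congr rfl fun ν _ => ?_
    rw [hren ν, Finset.sum_mul]
  rw [hRHS]
  unfold schurPoly
  refine Finset.sum_nbij'
    (fun T => (⟨nu T, tr T⟩ : Σ _ : Fin r → ℕ, Fin r × Fin c → Fin (e + 1)))
    (fun p => bw p.1 p.2) ?_ ?_ ?_ ?_ ?_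
  · intro T hT
    rw [Finset.mem_sigma]
    refine ⟨?_, htrmem T hT⟩
    rw [hstripsBelow, Finset.mem_filter]
    refine ⟨?_, hνstrip T hT⟩
    rw [Fintype.mem_piFinset]
    intro i
    rw [Finset.mem_Iic]
    exact hνle T hT i
  · intro p hp
    rw [Finset.mem_sigma] at hp
    exact hbwmem p.1 hp.1 p.2 hp.2
  · intro T hT
    exact hleft T hT
  · intro p hp
    rw [Finset.mem_sigma] at hp
    obtain ⟨ν, T'⟩ := p
    have e1 := hright1 ν hp.1 T' hp.2
    have e2 := hright2 ν hp.1 T' hp.2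
    show (⟨nu (bw ν T'), tr (bw ν T')⟩ : Σ _ : Fin r → ℕ, Fin r × Fin c → Fin (e + 1)) =
      ⟨ν, T'⟩
    exact Sigma.ext e1 (heq_of_eq e2)
  · intro T hT
    rw [Fin.prod_univ_castSucc]
    simp only [Fin.val_last, Fin.coe_castSucc]
    congr 1
    · refine Finset.prod_congr rfl fun k _ => ?_
      congr 2
      ext p
      simp only [Finset.mem_filter, Finset.mem_univ, true_and]
      rw [htr]
      have hk := k.isLt
      have hT2 := (T p).isLt
      by_cases hle : (T p : ℕ) ≤ e
      · rw [if_pos hle]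
      · rw [if_neg hle]
        omega
    · congr 1
      rw [totcount T, wdiff]
      exact Finset.sum_congr rfl fun i _ => rowcount T hT i

lemma schur_eq_chainF {r c : ℕ} : ∀ (e : ℕ) {μ : Fin r → ℕ}, isAnti μ → (∀ i, μ i ≤ c) →
    schurPoly r c e μ = chainF e μ := by
  intro e
  induction e with
  | zero =>
    intro μ _ hμc
    rw [schur_zero hμc, chainF]
  | succ e ih =>
    intro μ hμ hμc
    rw [schur_branch hμ hμc, chainF]
    refine Finset.sum_congr rfl fun ν hν => ?_
    rw [hstripsBelow, Finset.mem_filter] at hν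
    obtain ⟨hle, hs⟩ := hν
    rw [Fintype.mem_piFinset] at hle
    have hν1 : ∀ i, ν i ≤ c := fun i => le_trans (Finset.mem_Iic.mp (hle i)) (hμc i)
    rw [ih (hstrip_lower_anti hs) hν1]

/-! ### Conjugation -/

lemma conj_lt_iff {n l : ℕ} {β : Fin n → ℕ} (hβ : isAnti β) (i : Fin n) (j : Fin l) :
    (j : ℕ) < β i ↔ (i : ℕ) < conjPart l β j := by
  have hdc : ∀ i i' : Fin n, i ≤ i' →
      i' ∈ (Finset.univ.filter fun i : Fin n => (j : ℕ) < β i) →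
      i ∈ (Finset.univ.filter fun i : Fin n => (j : ℕ) < β i) := by
    intro i i' hii hi'
    simp only [Finset.mem_filter, Finset.mem_univ, true_and] at hi' ⊢
    exact lt_of_lt_of_le hi' (hβ i i' hii)
  have := downclosed_iff hdc i
  simp only [Finset.mem_filter, Finset.mem_univ, true_and] at this
  exact this

lemma conj_anti {n l : ℕ} (β : Fin n → ℕ) : isAnti (conjPart l β) := by
  intro j j' hjj
  apply Finset.card_le_card
  intro i hi
  simp only [Finset.mem_filter, Finset.mem_univ, true_and] at hi ⊢
  have : (j : ℕ) ≤ (j' : ℕ) := hjj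
  omega

lemma conj_le {n l : ℕ} (β : Fin n → ℕ) (j : Fin l) : conjPart l β j ≤ n := by
  refine le_trans (Finset.card_filter_le _ _) ?_
  rw [Finset.card_univ, Fintype.card_fin]

lemma conj_conj {n l : ℕ} {β : Fin n → ℕ} (hβ : isAnti β) (hβl : ∀ i, β i ≤ l) :
    conjPart n (conjPart l β) = β := by
  funext i
  show ((Finset.univ : Finset (Fin l)).filter fun j => (i : ℕ) < conjPart l β j).card = β i
  have : ((Finset.univ : Finset (Fin l)).filter fun j => (i : ℕ) < conjPart l β j) =
      (Finset.univ.filter fun j : Fin l => (j : ℕ) < β i) := by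
    apply Finset.filter_congr
    intro j _
    exact (conj_lt_iff hβ i j).symm
  rw [this, card_fin_lt l (β i) (hβl i)]

lemma sum_conj {n l : ℕ} {β : Fin n → ℕ} (hβl : ∀ i, β i ≤ l) :
    ∑ j, conjPart l β j = ∑ i, β i := by
  have : ∀ j : Fin l, conjPart l β j = ∑ i : Fin n, if (j : ℕ) < β i then 1 else 0 := by
    intro j
    exact Finset.card_filter _ _
  rw [Finset.sum_congr rfl fun j _ => this j, Finset.sum_comm]
  refine Finset.sum_congr rfl fun i _ => ?_
  rw [← Finset.card_filter]
  exact card_fin_lt l (β i) (hβl i)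

lemma wdiff_conj {n l : ℕ} {β ρ : Fin n → ℕ} (hβ : ∀ i, β i ≤ l) (hρβ : ∀ i, ρ i ≤ β i) :
    wdiff (conjPart l β) (conjPart l ρ) = wdiff β ρ := by
  have hsub : ∀ j : Fin l, conjPart l ρ j ≤ conjPart l β j := by
    intro j
    apply Finset.card_le_card
    intro i hi
    simp only [Finset.mem_filter, Finset.mem_univ, true_and] at hi ⊢
    have := hρβ i
    omega
  unfold wdiff
  rw [Finset.sum_tsub_distrib _ (fun j _ => hsub j),
    Finset.sum_tsub_distrib _ (fun i _ => hρβ i),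
    sum_conj hβ, sum_conj (fun i => le_trans (hρβ i) (hβ i))]

lemma chainF_conj {n l : ℕ} : ∀ (m : ℕ) (β : Fin n → ℕ), isAnti β → (∀ i, β i ≤ l) →
    chainF (r := l) m (conjPart l β) = chainG (n := n) m β := by
  intro m
  induction m with
  | zero =>
    intro β hβ hβl
    have hiff : conjPart l β = 0 ↔ β = 0 := by
      constructor
      · intro h0
        funext i
        simp only [Pi.zero_apply]
        by_contra hne
        have h1 : 1 ≤ β i := by omega
        have hl : 0 < l := lt_of_lt_of_le h1 (hβl i)
        have : (i : ℕ) < conjPart l β ⟨0, hl⟩ :=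
          (conj_lt_iff hβ i ⟨0, hl⟩).mp (by simp only [Fin.val_mk]; omega)
        rw [h0] at this
        simp [conjPart] at this
      · intro h0
        subst h0
        funext j
        show (Finset.univ.filter fun i : Fin n => (j : ℕ) < 0).card = 0
        simp
    show chainF 0 _ = chainG 0 _
    rw [chainF, chainG]
    by_cases h0 : β = 0
    · rw [if_pos (hiff.mpr h0), if_pos h0]
    · rw [if_neg (fun hc => h0 (hiff.mp hc)), if_neg h0]
  | succ m ih =>
    intro β hβ hβl
    show chainF (m + 1) _ = chainG (m + 1) _
    rw [chainF, chainG]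
    refine Finset.sum_nbij' (fun ν => conjPart n ν) (fun ρ => conjPart l ρ) ?_ ?_ ?_ ?_ ?_
    · -- membership forward
      intro ν hν
      rw [hstripsBelow, Finset.mem_filter, Fintype.mem_piFinset] at hν
      obtain ⟨hνle, hνs⟩ := hν
      simp only [Finset.mem_Iic] at hνle
      have hνanti : isAnti ν := hstrip_lower_anti hνs
      have hνn : ∀ j, ν j ≤ n := fun j => le_trans (hνs.1 j) (conj_le β j)
      have hvs : vstrip (conjPart n ν) β := by
        intro i
        constructor
        · -- conj ν i ≤ β i
          have hsub : (Finset.univ.filter fun j : Fin l => (i : ℕ) < ν j) ⊆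
              (Finset.univ.filter fun j : Fin l => (j : ℕ) < β i) := by
            intro j hj
            simp only [Finset.mem_filter, Finset.mem_univ, true_and] at hj ⊢
            have : (i : ℕ) < conjPart l β j := lt_of_lt_of_le hj (hνs.1 j)
            exact (conj_lt_iff hβ i j).mpr this
          have := Finset.card_le_card hsub
          rw [card_fin_lt l (β i) (hβl i)] at this
          exact this
        · -- β i ≤ conj ν i + 1
          rcases Nat.eq_zero_or_pos (β i) with h0 | h0
          · omega
          have hT : (Finset.univ.filter fun j : Fin l => (j : ℕ) < β i).card = β i :=
            card_fin_lt l (β i) (hβl i)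
          have hsub : (Finset.univ.filter fun j : Fin l => (j : ℕ) < β i) ⊆
              insert ⟨0, lt_of_lt_of_le h0 (hβl i)⟩
                (Finset.univ.filter fun j : Fin l => 1 ≤ (j : ℕ) ∧ (j : ℕ) < β i) := by
            intro j hj
            simp only [Finset.mem_filter, Finset.mem_univ, true_and, Finset.mem_insert] at hj ⊢
            rcases Nat.eq_zero_or_pos (j : ℕ) with hj0 | hj0
            · exact Or.inl (Fin.ext hj0)
            · exact Or.inr ⟨hj0, hj⟩
          have hcard1 := Finset.card_le_card hsub
          have hcard2 := Finset.card_insert_le (⟨0, lt_of_lt_of_le h0 (hβl i)⟩ : Fin l)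
            (Finset.univ.filter fun j : Fin l => 1 ≤ (j : ℕ) ∧ (j : ℕ) < β i)
          -- injection from S₁ into the conj-ν filter
          have hinj : (Finset.univ.filter fun j : Fin l => 1 ≤ (j : ℕ) ∧ (j : ℕ) < β i).card ≤
              (Finset.univ.filter fun j : Fin l => (i : ℕ) < ν j).card := by
            apply Finset.card_le_card_of_injOn
              (fun j => ⟨(j : ℕ) - 1, lt_of_le_of_lt (Nat.sub_le _ _) j.isLt⟩)
            · intro j hj
              simp only [Finset.mem_coe, Finset.mem_filter, Finset.mem_univ, true_and] at hj ⊢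
              obtain ⟨hj1, hj2⟩ := hj
              have hc : (i : ℕ) < conjPart l β j := (conj_lt_iff hβ i j).mp hj2
              have := hνs.2 ⟨(j : ℕ) - 1, lt_of_le_of_lt (Nat.sub_le _ _) j.isLt⟩ j
                (by simp only [Fin.val_mk]; omega)
              omega
            · intro j1 h1 j2 h2 heq
              simp only [Finset.mem_coe, Finset.mem_filter, Finset.mem_univ, true_and] at h1 h2
              have := congrArg Fin.val heq
              simp only [Fin.val_mk] at this
              exact Fin.ext (by omega)
          show β i ≤ conjPart n ν i + 1
          unfold conjPart
          omega
      rw [vstripsBelow, Finset.mem_filter, Fintype.mem_piFinset]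
      exact ⟨fun i => Finset.mem_Iic.mpr (hvs i).1, conj_anti ν, hvs⟩
    · -- membership backward
      intro ρ hρ
      rw [vstripsBelow, Finset.mem_filter, Fintype.mem_piFinset] at hρ
      obtain ⟨hρle, hρanti, hρvs⟩ := hρ
      simp only [Finset.mem_Iic] at hρle
      have hρl : ∀ i, ρ i ≤ l := fun i => le_trans (hρle i) (hβl i)
      have hhs : hstrip (conjPart l ρ) (conjPart l β) := by
        constructor
        · intro j
          apply Finset.card_le_card
          intro i hi
          simp only [Finset.mem_filter, Finset.mem_univ, true_and] at hi ⊢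
          have := hρle i
          omega
        · intro j j' hj'
          apply Finset.card_le_card
          intro i hi
          simp only [Finset.mem_filter, Finset.mem_univ, true_and] at hi ⊢
          have := (hρvs i).2
          omega
      rw [hstripsBelow, Finset.mem_filter, Fintype.mem_piFinset]
      exact ⟨fun j => Finset.mem_Iic.mpr (hhs.1 j), hhs⟩
    · -- left inverse
      intro ν hν
      rw [hstripsBelow, Finset.mem_filter, Fintype.mem_piFinset] at hν
      exact conj_conj (hstrip_lower_anti hν.2) (fun j => le_trans (hν.2.1 j) (conj_le β j))
    · -- right inverse
      intro ρ hρ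
      rw [vstripsBelow, Finset.mem_filter, Fintype.mem_piFinset] at hρ
      simp only [Finset.mem_Iic] at hρ
      exact conj_conj hρ.2.1 (fun i => le_trans (hρ.1 i) (hβl i))
    · -- values
      intro ν hν
      rw [hstripsBelow, Finset.mem_filter, Fintype.mem_piFinset] at hν
      obtain ⟨hνle, hνs⟩ := hν
      simp only [Finset.mem_Iic] at hνle
      have hνanti : isAnti ν := hstrip_lower_anti hνs
      have hνn : ∀ j, ν j ≤ n := fun j => le_trans (hνs.1 j) (conj_le β j)
      have hcc : conjPart l (conjPart n ν) = ν := conj_conj hνanti hνn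
      have hρβ : ∀ i, conjPart n ν i ≤ β i := by
        intro i
        have hsub : (Finset.univ.filter fun j : Fin l => (i : ℕ) < ν j) ⊆
            (Finset.univ.filter fun j : Fin l => (j : ℕ) < β i) := by
          intro j hj
          simp only [Finset.mem_filter, Finset.mem_univ, true_and] at hj ⊢
          exact (conj_lt_iff hβ i j).mpr (lt_of_lt_of_le hj (hνs.1 j))
        have := Finset.card_le_card hsub
        rw [card_fin_lt l (β i) (hβl i)] at this
        exact this
      have hw : wdiff (conjPart l β) ν = wdiff β (conjPart n ν) := by
        conv_lhs => rw [← hcc]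
        exact wdiff_conj hβl hρβ
      have hih := ih (conjPart n ν) (conj_anti ν) (fun i => le_trans (hρβ i) (hβl i))
      rw [hcc] at hih
      simp only [hw, hih]

/-! ### The Pieri rule -/

lemma pieri {n : ℕ} : ∀ e : ℕ, e ≤ n → ∀ b : Fin n → ℕ, isAnti b →
    (∑ lam ∈ vstripsAbove b,
        Polynomial.C (chainF (r := n) e lam) * Polynomial.X ^ wdiff lam b) =
      Polynomial.C (chainF e b) *
        ∏ i : Fin e, (1 + Polynomial.C (X i) * Polynomial.X) := by
  intro e
  induction e with
  | zero =>
    intro _ b hb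
    have hP : (∏ i : Fin 0, (1 + Polynomial.C (X i) *
        (Polynomial.X : Polynomial (MvPolynomial (Fin 0) ℤ)))) = 1 := by simp
    rw [hP, mul_one]
    simp only [chainF]
    by_cases hb0 : b = 0
    · subst hb0
      rw [if_pos rfl, Finset.sum_eq_single (0 : Fin n → ℕ)]
      · rw [if_pos rfl]
        have hw : wdiff (0 : Fin n → ℕ) 0 = 0 := by simp [wdiff]
        rw [hw]
        simp
      · intro lam _ hne
        rw [if_neg hne]
        simp
      · intro h0
        exfalso
        apply h0
        rw [vstripsAbove, Finset.mem_filter]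
        constructor
        · rw [Fintype.mem_piFinset]; intro i; simp
        · intro i; simp
    · rw [if_neg hb0, map_zero]
      refine Finset.sum_eq_zero fun lam hlam => ?_
      have hlam0 : lam ≠ 0 := by
        intro h0
        subst h0
        rw [vstripsAbove, Finset.mem_filter] at hlam
        apply hb0
        funext i
        have h1 := (hlam.2 i).1
        simp only [Pi.zero_apply] at h1 ⊢
        omega
      rw [if_neg hlam0, map_zero, zero_mul]
  | succ e ih =>
    intro he b hb
    have hen : e ≤ n := by omega
    obtain ⟨U, hUdef⟩ : ∃ U : Finset (Fin n → ℕ),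
      U = Fintype.piFinset (fun i => Finset.Iic (b i + 1)) := ⟨_, rfl⟩
    obtain ⟨x, hxdef⟩ : ∃ x : Polynomial (MvPolynomial (Fin (e + 1)) ℤ),
      x = Polynomial.C (X (Fin.last e)) := ⟨_, rfl⟩
    obtain ⟨t, htdef⟩ : ∃ t : Polynomial (MvPolynomial (Fin (e + 1)) ℤ),
      t = Polynomial.X := ⟨_, rfl⟩
    obtain ⟨F, hF⟩ : ∃ F : (Fin n → ℕ) → Polynomial (MvPolynomial (Fin (e + 1)) ℤ),
      ∀ ν, F ν = Polynomial.C (rename Fin.castSucc (chainF (r := n) e ν)) := ⟨_, fun _ => rfl⟩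
    have hvset : vstripsAbove b = U.filter (fun lam => vstrip b lam) := by
      rw [hUdef, vstripsAbove]
    have hsets2 : ∀ σ : Fin n → ℕ, (∀ i, σ i ≤ b i) →
        vstripsAbove σ = U.filter (fun τ => vstrip σ τ) := by
      intro σ hσb
      rw [vstripsAbove]
      ext τ
      rw [Finset.mem_filter, Finset.mem_filter, Fintype.mem_piFinset, hUdef,
        Fintype.mem_piFinset]
      constructor
      · rintro ⟨hle, hp⟩
        refine ⟨fun i => Finset.mem_Iic.mpr ?_, hp⟩
        have h1 := Finset.mem_Iic.mp (hle i)
        have h2 := hσb i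
        omega
      · rintro ⟨hle, hp⟩
        refine ⟨fun i => Finset.mem_Iic.mpr ?_, hp⟩
        have := (hp i).2
        omega
    -- transformed LHS
    have hL : (∑ lam ∈ vstripsAbove b,
        Polynomial.C (chainF (e + 1) lam) * Polynomial.X ^ wdiff lam b) =
        ∑ ν ∈ U, F ν * ∑ lam ∈ U,
          (if vstrip b lam ∧ hstrip ν lam then x ^ wdiff lam ν * t ^ wdiff lam b else 0) := by
      have h1 : ∀ lam ∈ vstripsAbove b,
          Polynomial.C (chainF (r := n) (e + 1) lam) * Polynomial.X ^ wdiff lam b =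
          ∑ ν ∈ U, (if hstrip ν lam then
            F ν * (x ^ wdiff lam ν * t ^ wdiff lam b) else 0) := by
        intro lam hlam
        rw [vstripsAbove, Finset.mem_filter] at hlam
        have hset : hstripsBelow lam = U.filter (fun ν => hstrip ν lam) := by
          ext ν
          rw [hstripsBelow, Finset.mem_filter, Finset.mem_filter, Fintype.mem_piFinset,
            hUdef, Fintype.mem_piFinset]
          constructor
          · rintro ⟨hle, hs⟩
            refine ⟨fun i => Finset.mem_Iic.mpr ?_, hs⟩
            have h2 := (hlam.2 i).2
            have h3 := Finset.mem_Iic.mp (hle i)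
            omega
          · rintro ⟨-, hs⟩
            exact ⟨fun i => Finset.mem_Iic.mpr (hs.1 i), hs⟩
        rw [chainF, map_sum, Finset.sum_mul, hset, Finset.sum_filter]
        refine Finset.sum_congr rfl fun ν _ => ?_
        by_cases hsν : hstrip ν lam
        · rw [if_pos hsν, if_pos hsν, hF, hxdef, htdef, map_mul, map_pow]
          ring
        · rw [if_neg hsν, if_neg hsν]
      calc ∑ lam ∈ vstripsAbove b,
            Polynomial.C (chainF (e + 1) lam) * Polynomial.X ^ wdiff lam b
          = ∑ lam ∈ vstripsAbove b, ∑ ν ∈ U, (if hstrip ν lam then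
              F ν * (x ^ wdiff lam ν * t ^ wdiff lam b) else 0) := Finset.sum_congr rfl h1
        _ = ∑ lam ∈ U, (if vstrip b lam then ∑ ν ∈ U, (if hstrip ν lam then
              F ν * (x ^ wdiff lam ν * t ^ wdiff lam b) else 0) else 0) := by
            rw [hvset, Finset.sum_filter]
        _ = ∑ lam ∈ U, ∑ ν ∈ U, (if vstrip b lam ∧ hstrip ν lam then
              F ν * (x ^ wdiff lam ν * t ^ wdiff lam b) else 0) := by
            refine Finset.sum_congr rfl fun lam _ => ?_
            by_cases hv : vstrip b lam
            · rw [if_pos hv]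
              refine Finset.sum_congr rfl fun ν _ => ?_
              by_cases hs : hstrip ν lam
              · rw [if_pos hs, if_pos ⟨hv, hs⟩]
              · rw [if_neg hs, if_neg (fun hc => hs hc.2)]
            · rw [if_neg hv]
              exact (Finset.sum_eq_zero fun ν _ => if_neg (fun hc => hv hc.1)).symm
        _ = ∑ ν ∈ U, F ν * ∑ lam ∈ U,
              (if vstrip b lam ∧ hstrip ν lam then
                x ^ wdiff lam ν * t ^ wdiff lam b else 0) := by
            rw [Finset.sum_comm]
            refine Finset.sum_congr rfl fun ν _ => ?_
            rw [Finset.mul_sum]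
            refine Finset.sum_congr rfl fun lam _ => ?_
            rw [mul_ite, mul_zero]
    -- mapped induction hypothesis
    have hIH : ∀ σ : Fin n → ℕ, isAnti σ →
        (∑ τ ∈ vstripsAbove σ, F τ * t ^ wdiff τ σ) =
          F σ * ∏ i : Fin e, (1 + Polynomial.C (X (Fin.castSucc i)) * t) := by
      intro σ hσ
      have hmap := congrArg (Polynomial.mapRingHom
        ((rename (Fin.castSucc : Fin e → Fin (e + 1))).toRingHom)) (ih hen σ hσ)
      simp only [map_sum, map_mul, map_pow, map_prod, map_one, map_add,
        Polynomial.coe_mapRingHom, Polynomial.map_C, Polynomial.map_X, Polynomial.map_one,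
        AlgHom.toRingHom_eq_coe, RingHom.coe_coe, rename_X] at hmap
      simp only [hF, htdef]
      exact hmap
    -- transformed RHS
    have hR : Polynomial.C (chainF (r := n) (e + 1) b) *
        ∏ i : Fin (e + 1), (1 + Polynomial.C (X i) * Polynomial.X) =
        ∑ ν ∈ U, F ν * ((1 + x * t) * ∑ σ ∈ U,
          (if hstrip σ b ∧ vstrip σ ν then x ^ wdiff b σ * t ^ wdiff ν σ else 0)) := by
      rw [chainF, Fin.prod_univ_castSucc, map_sum, Finset.sum_mul]
      have hbset : hstripsBelow b = U.filter (fun σ => hstrip σ b) := by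
        ext σ
        rw [hstripsBelow, Finset.mem_filter, Finset.mem_filter, Fintype.mem_piFinset,
          hUdef, Fintype.mem_piFinset]
        constructor
        · rintro ⟨hle, hs⟩
          refine ⟨fun i => Finset.mem_Iic.mpr ?_, hs⟩
          have := Finset.mem_Iic.mp (hle i)
          omega
        · rintro ⟨-, hs⟩
          exact ⟨fun i => Finset.mem_Iic.mpr (hs.1 i), hs⟩
      calc ∑ σ ∈ hstripsBelow b,
            Polynomial.C (rename Fin.castSucc (chainF e σ) * X (Fin.last e) ^ wdiff b σ) *
              ((∏ i : Fin e, (1 + Polynomial.C (X (Fin.castSucc i)) * Polynomial.X)) *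
                (1 + Polynomial.C (X (Fin.last e)) * Polynomial.X))
          = ∑ σ ∈ hstripsBelow b, x ^ wdiff b σ * (1 + x * t) *
              ∑ τ ∈ vstripsAbove σ, F τ * t ^ wdiff τ σ := by
            refine Finset.sum_congr rfl fun σ hσ => ?_
            rw [hstripsBelow, Finset.mem_filter] at hσ
            rw [hIH σ (hstrip_lower_anti hσ.2), hF, map_mul, map_pow, hxdef, htdef]
            ring
        _ = ∑ σ ∈ U, (if hstrip σ b then x ^ wdiff b σ * (1 + x * t) *
              ∑ τ ∈ U, (if vstrip σ τ then F τ * t ^ wdiff τ σ else 0) else 0) := by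
            rw [hbset, Finset.sum_filter]
            refine Finset.sum_congr rfl fun σ _ => ?_
            by_cases hs : hstrip σ b
            · rw [if_pos hs, if_pos hs, hsets2 σ hs.1, Finset.sum_filter]
            · rw [if_neg hs, if_neg hs]
        _ = ∑ σ ∈ U, ∑ τ ∈ U, (if hstrip σ b ∧ vstrip σ τ then
              F τ * (x ^ wdiff b σ * (1 + x * t) * t ^ wdiff τ σ) else 0) := by
            refine Finset.sum_congr rfl fun σ _ => ?_
            by_cases hs : hstrip σ b
            · rw [if_pos hs, Finset.mul_sum]
              refine Finset.sum_congr rfl fun τ _ => ?_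
              by_cases hv : vstrip σ τ
              · rw [if_pos hv, if_pos ⟨hs, hv⟩]
                ring
              · rw [if_neg hv, if_neg (fun hc => hv hc.2), mul_zero]
            · rw [if_neg hs]
              exact (Finset.sum_eq_zero fun τ _ => if_neg (fun hc => hs hc.1)).symm
        _ = ∑ ν ∈ U, F ν * ((1 + x * t) * ∑ σ ∈ U,
              (if hstrip σ b ∧ vstrip σ ν then x ^ wdiff b σ * t ^ wdiff ν σ else 0)) := by
            rw [Finset.sum_comm]
            refine Finset.sum_congr rfl fun ν _ => ?_
            rw [Finset.mul_sum, Finset.mul_sum]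
            refine Finset.sum_congr rfl fun σ _ => ?_
            split_ifs with hc
            · ring
            · ring
    rw [hL, hR]
    refine Finset.sum_congr rfl fun ν hν => ?_
    by_cases hν0 : chainF (r := n) e ν = 0
    · rw [hF, hν0]
      simp
    · have hνanti : isAnti ν := by
        by_contra hc
        exact hν0 (chainF_not_anti hc)
      have hνlast : ∀ i : Fin n, (i : ℕ) + 1 = n → ν i = 0 := by
        intro i hi
        by_contra hc
        exact hν0 (chainF_big e (by omega) hc)
      congr 1
      have hstar := star x t (by omega : 0 < n) ν b hνanti hb hνlast
      have hwprod : ∀ α β γ : Fin n → ℕ,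
          ((∏ i, x ^ (α i - β i)) * ∏ i, t ^ (α i - γ i)) =
            x ^ wdiff α β * t ^ wdiff α γ := by
        intro α β γ
        rw [wdiff, wdiff, Finset.prod_pow_eq_pow_sum, Finset.prod_pow_eq_pow_sum]
      have hwprod2 : ∀ g : Fin n → ℕ,
          ((∏ i, x ^ (b i - g i)) * ∏ i, t ^ (ν i - g i)) =
            x ^ wdiff b g * t ^ wdiff ν g := by
        intro g
        rw [wdiff, wdiff, Finset.prod_pow_eq_pow_sum, Finset.prod_pow_eq_pow_sum]
      calc ∑ lam ∈ U, (if vstrip b lam ∧ hstrip ν lam then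
              x ^ wdiff lam ν * t ^ wdiff lam b else 0)
          = ∑ lam ∈ U.filter (fun lam => vstrip b lam ∧ hstrip ν lam),
              ((∏ i, x ^ (lam i - ν i)) * ∏ i, t ^ (lam i - b i)) := by
            rw [Finset.sum_filter]
            refine Finset.sum_congr rfl fun lam _ => ?_
            rw [hwprod lam ν b]
        _ = (1 + x * t) * ∑ g ∈ (Fintype.piFinset fun i => Finset.Iic (b i)).filter
              (fun g => hstrip g b ∧ vstrip g ν),
              ((∏ i, x ^ (b i - g i)) * ∏ i, t ^ (ν i - g i)) := by
            rw [← hstar, hUdef]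
        _ = (1 + x * t) * ∑ σ ∈ U,
              (if hstrip σ b ∧ vstrip σ ν then x ^ wdiff b σ * t ^ wdiff ν σ else 0) := by
            refine congrArg (fun s => (1 + x * t) * s) ?_
            have hset3 : (Fintype.piFinset fun i => Finset.Iic (b i)).filter
                (fun g => hstrip g b ∧ vstrip g ν) =
                U.filter (fun g => hstrip g b ∧ vstrip g ν) := by
              ext g
              rw [Finset.mem_filter, Finset.mem_filter, Fintype.mem_piFinset,
                hUdef, Fintype.mem_piFinset]
              constructor
              · rintro ⟨hle, hp⟩
                refine ⟨fun i => Finset.mem_Iic.mpr ?_, hp⟩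
                have := Finset.mem_Iic.mp (hle i)
                omega
              · rintro ⟨-, hp⟩
                exact ⟨fun i => Finset.mem_Iic.mpr (hp.1.1 i), hp⟩
            rw [hset3, Finset.sum_filter]
            refine Finset.sum_congr rfl fun σ _ => ?_
            by_cases hc : hstrip σ b ∧ vstrip σ ν
            · rw [if_pos hc, if_pos hc, hwprod2 σ]
            · rw [if_neg hc, if_neg hc]

/-! ### The grand induction -/

lemma chainF_zero {r : ℕ} : ∀ e : ℕ, chainF (r := r) e 0 = 1 := by
  intro e
  induction e with
  | zero => rw [chainF, if_pos rfl]
  | succ e ih =>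
    rw [chainF]
    have hset : hstripsBelow (0 : Fin r → ℕ) = {0} := by
      ext ν
      rw [hstripsBelow, Finset.mem_filter, Fintype.mem_piFinset]
      rw [Finset.mem_singleton]
      constructor
      · rintro ⟨h1, -⟩
        funext i
        have h2 := Finset.mem_Iic.mp (h1 i)
        simp only [Pi.zero_apply] at h2 ⊢
        omega
      · intro h
        subst h
        exact ⟨fun i => Finset.mem_Iic.mpr (le_refl _),
          ⟨fun i => le_refl _, fun i j _ => le_refl _⟩⟩
    rw [hset, Finset.sum_singleton, ih, map_one, one_mul]
    have hw : wdiff (0 : Fin r → ℕ) 0 = 0 := by simp [wdiff]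
    rw [hw, pow_zero]

lemma grand (n : ℕ) : ∀ L : ℕ,
    (∏ i : Fin n, ∏ j : Fin L,
        (1 + X (Sum.inl i) * X (Sum.inr j) : MvPolynomial (Fin n ⊕ Fin L) ℤ)) =
      ∑ lam ∈ Fintype.piFinset (fun _ : Fin n => Finset.Iic L),
        rename Sum.inl (chainF n lam) * rename Sum.inr (chainG L lam) := by
  intro L
  induction L with
  | zero =>
    have hset0 : Fintype.piFinset (fun _ : Fin n => Finset.Iic (0 : ℕ)) = {0} := by
      ext lam
      rw [Fintype.mem_piFinset, Finset.mem_singleton]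
      constructor
      · intro h
        funext i
        have := Finset.mem_Iic.mp (h i)
        simp only [Pi.zero_apply]
        omega
      · intro h
        subst h
        intro i
        exact Finset.mem_Iic.mpr (le_refl _)
    rw [hset0, Finset.sum_singleton, chainF_zero, map_one, one_mul]
    rw [show chainG (n := n) 0 0 = 1 from by rw [chainG, if_pos rfl], map_one]
    simp
  | succ L ihL =>
    have hfac : (∏ i : Fin n, ∏ j : Fin (L + 1),
        (1 + X (Sum.inl i) * X (Sum.inr j) : MvPolynomial (Fin n ⊕ Fin (L + 1)) ℤ)) =
        (∏ i : Fin n, ∏ j : Fin L,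
          (1 + X (Sum.inl i) * X (Sum.inr (Fin.castSucc j)))) *
        ∏ i : Fin n, (1 + X (Sum.inl i) * X (Sum.inr (Fin.last L))) := by
      rw [← Finset.prod_mul_distrib]
      refine Finset.prod_congr rfl fun i _ => ?_
      rw [Fin.prod_univ_castSucc]
    have hΨ := congrArg (rename (Sum.map (id : Fin n → Fin n)
      (Fin.castSucc : Fin L → Fin (L + 1)))) ihL
    simp only [map_prod, map_add, map_one, map_mul, rename_X, Sum.map_inl, Sum.map_inr,
      map_sum, rename_rename, id_eq] at hΨ
    have hcompl : (Sum.map (id : Fin n → Fin n) (Fin.castSucc : Fin L → Fin (L + 1))) ∘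
        Sum.inl = Sum.inl := by
      funext a; simp
    have hcompr : (Sum.map (id : Fin n → Fin n) (Fin.castSucc : Fin L → Fin (L + 1))) ∘
        Sum.inr = Sum.inr ∘ Fin.castSucc := by
      funext a; simp
    rw [hcompl, hcompr] at hΨ
    have hpieriρ : ∀ ρ : Fin n → ℕ, isAnti ρ →
        (∑ lam ∈ vstripsAbove ρ, rename Sum.inl (chainF n lam) *
          (X (Sum.inr (Fin.last L)) : MvPolynomial (Fin n ⊕ Fin (L + 1)) ℤ) ^ wdiff lam ρ) =
        rename Sum.inl (chainF n ρ) *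
          ∏ i : Fin n, (1 + X (Sum.inl i) * X (Sum.inr (Fin.last L))) := by
      intro ρ hρ
      have hmap := congrArg (Polynomial.eval₂RingHom
        ((rename (Sum.inl : Fin n → Fin n ⊕ Fin (L + 1))).toRingHom :
          MvPolynomial (Fin n) ℤ →+* MvPolynomial (Fin n ⊕ Fin (L + 1)) ℤ)
        (X (Sum.inr (Fin.last L)))) (pieri n (le_refl n) ρ hρ)
      simp only [map_sum, map_mul, map_pow, map_prod, map_add, map_one,
        Polynomial.coe_eval₂RingHom, Polynomial.eval₂_C, Polynomial.eval₂_X,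
        AlgHom.toRingHom_eq_coe, RingHom.coe_coe, rename_X] at hmap
      exact hmap
    have hGexp : ∀ lam : Fin n → ℕ,
        rename (Sum.inr : Fin (L + 1) → Fin n ⊕ Fin (L + 1)) (chainG (L + 1) lam) =
        ∑ ρ ∈ vstripsBelow lam, rename (Sum.inr ∘ Fin.castSucc) (chainG L ρ) *
          (X (Sum.inr (Fin.last L))) ^ wdiff lam ρ := by
      intro lam
      rw [chainG, map_sum]
      refine Finset.sum_congr rfl fun ρ _ => ?_
      rw [map_mul, map_pow, rename_X, rename_rename]
    obtain ⟨V, hV⟩ : ∃ V : Finset (Fin n → ℕ),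
      V = Fintype.piFinset (fun _ : Fin n => Finset.Iic (L + 1)) := ⟨_, rfl⟩
    have hTarget : (∑ lam ∈ Fintype.piFinset (fun _ : Fin n => Finset.Iic (L + 1)),
        rename Sum.inl (chainF n lam) * rename Sum.inr (chainG (L + 1) lam)) =
        ∑ ρ ∈ V, (∑ lam ∈ V,
          (if isAnti ρ ∧ vstrip ρ lam then rename Sum.inl (chainF n lam) *
            (X (Sum.inr (Fin.last L)) : MvPolynomial (Fin n ⊕ Fin (L + 1)) ℤ) ^ wdiff lam ρ
            else 0)) * rename (Sum.inr ∘ Fin.castSucc) (chainG L ρ) := by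
      rw [← hV]
      have hset1 : ∀ lam ∈ V, vstripsBelow lam =
          V.filter (fun ρ => isAnti ρ ∧ vstrip ρ lam) := by
        intro lam hlam
        rw [hV, Fintype.mem_piFinset] at hlam
        ext ρ
        rw [vstripsBelow, Finset.mem_filter, Finset.mem_filter, Fintype.mem_piFinset,
          hV, Fintype.mem_piFinset]
        constructor
        · rintro ⟨hle, hp⟩
          refine ⟨fun i => Finset.mem_Iic.mpr ?_, hp⟩
          have h1 := Finset.mem_Iic.mp (hle i)
          have h2 := Finset.mem_Iic.mp (hlam i)
          omega
        · rintro ⟨-, hp⟩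
          exact ⟨fun i => Finset.mem_Iic.mpr ((hp.2 i).1), hp⟩
      calc ∑ lam ∈ V, rename Sum.inl (chainF n lam) * rename Sum.inr (chainG (L + 1) lam)
          = ∑ lam ∈ V, ∑ ρ ∈ V, (if isAnti ρ ∧ vstrip ρ lam then
              rename Sum.inl (chainF n lam) *
                (X (Sum.inr (Fin.last L))) ^ wdiff lam ρ *
                rename (Sum.inr ∘ Fin.castSucc) (chainG L ρ) else 0) := by
            refine Finset.sum_congr rfl fun lam hlam => ?_
            rw [hGexp lam, Finset.mul_sum, hset1 lam hlam, Finset.sum_filter]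
            refine Finset.sum_congr rfl fun ρ _ => ?_
            by_cases hc : isAnti ρ ∧ vstrip ρ lam
            · rw [if_pos hc, if_pos hc]
              ring
            · rw [if_neg hc, if_neg hc]
        _ = ∑ ρ ∈ V, (∑ lam ∈ V,
              (if isAnti ρ ∧ vstrip ρ lam then rename Sum.inl (chainF n lam) *
                (X (Sum.inr (Fin.last L))) ^ wdiff lam ρ else 0)) *
              rename (Sum.inr ∘ Fin.castSucc) (chainG L ρ) := by
            rw [Finset.sum_comm]
            refine Finset.sum_congr rfl fun ρ _ => ?_
            rw [Finset.sum_mul]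
            refine Finset.sum_congr rfl fun lam _ => ?_
            rw [ite_mul, zero_mul]
    have hsub : Fintype.piFinset (fun _ : Fin n => Finset.Iic L) ⊆ V := by
      intro ρ hρ
      rw [Fintype.mem_piFinset] at hρ
      rw [hV, Fintype.mem_piFinset]
      intro i
      have := Finset.mem_Iic.mp (hρ i)
      exact Finset.mem_Iic.mpr (by omega)
    have hK0 : ∀ ρ ∈ V, ρ ∉ Fintype.piFinset (fun _ : Fin n => Finset.Iic L) →
        (∑ lam ∈ V,
          (if isAnti ρ ∧ vstrip ρ lam then rename Sum.inl (chainF n lam) *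
            (X (Sum.inr (Fin.last L)) : MvPolynomial (Fin n ⊕ Fin (L + 1)) ℤ) ^ wdiff lam ρ
            else 0)) * rename (Sum.inr ∘ Fin.castSucc) (chainG L ρ) = 0 := by
      intro ρ _ hρn
      rw [Fintype.mem_piFinset] at hρn
      push_neg at hρn
      obtain ⟨i, hi⟩ := hρn
      rw [Finset.mem_Iic] at hi
      rw [chainG_big L (by omega : L < ρ i), map_zero, mul_zero]
    rw [hTarget, ← Finset.sum_subset hsub hK0, hfac, hΨ, Finset.sum_mul]
    refine Finset.sum_congr rfl fun ρ hρ => ?_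
    rw [Fintype.mem_piFinset] at hρ
    by_cases hanti : isAnti ρ
    · have hsetv : V.filter (fun lam => vstrip ρ lam) = vstripsAbove ρ := by
        ext lam
        rw [vstripsAbove, Finset.mem_filter, Finset.mem_filter, Fintype.mem_piFinset,
          hV, Fintype.mem_piFinset]
        constructor
        · rintro ⟨-, hp⟩
          exact ⟨fun i => Finset.mem_Iic.mpr ((hp i).2), hp⟩
        · rintro ⟨hle, hp⟩
          refine ⟨fun i => Finset.mem_Iic.mpr ?_, hp⟩
          have h1 := Finset.mem_Iic.mp (hle i)
          have h2 := Finset.mem_Iic.mp (hρ i)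
          omega
      have hinner : (∑ lam ∈ V,
          (if isAnti ρ ∧ vstrip ρ lam then rename Sum.inl (chainF n lam) *
            (X (Sum.inr (Fin.last L)) : MvPolynomial (Fin n ⊕ Fin (L + 1)) ℤ) ^ wdiff lam ρ
            else 0)) = ∑ lam ∈ vstripsAbove ρ, rename Sum.inl (chainF n lam) *
              (X (Sum.inr (Fin.last L))) ^ wdiff lam ρ := by
        rw [← hsetv, Finset.sum_filter]
        refine Finset.sum_congr rfl fun lam _ => ?_
        by_cases hv : vstrip ρ lam
        · rw [if_pos ⟨hanti, hv⟩, if_pos hv]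
        · rw [if_neg (fun hc => hv hc.2), if_neg hv]
      rw [hinner, hpieriρ ρ hanti]
      ring
    · have hinner : (∑ lam ∈ V,
          (if isAnti ρ ∧ vstrip ρ lam then rename Sum.inl (chainF n lam) *
            (X (Sum.inr (Fin.last L)) : MvPolynomial (Fin n ⊕ Fin (L + 1)) ℤ) ^ wdiff lam ρ
            else 0)) = 0 :=
        Finset.sum_eq_zero fun lam _ => if_neg (fun hc => hanti hc.1)
      rw [hinner, zero_mul, chainF_not_anti hanti, map_zero, zero_mul, zero_mul]

end DualCauchy

/-- **The dual Cauchy identity.**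
In `ℤ[x_1,…,x_n, y_1,…,y_l]`, the product `∏_{i,j} (1 + x_i y_j)` equals
`∑_λ s_λ(x) · s_{λᵀ}(y)`, the sum running over partitions `λ` contained in the
`n × l` rectangle. -/
theorem dual_cauchy_identity (n l : ℕ) :
    (∏ i : Fin n, ∏ j : Fin l,
        (1 + X (Sum.inl i) * X (Sum.inr j) : MvPolynomial (Fin n ⊕ Fin l) ℤ)) =
    ∑ lam ∈ (Finset.univ : Finset (Fin n → Fin (l + 1))).filter
        (fun lam => ∀ i i' : Fin n, i ≤ i' → (lam i' : ℕ) ≤ (lam i : ℕ)),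
      rename Sum.inl (schurPoly n l n (fun i => (lam i : ℕ))) *
        rename Sum.inr (schurPoly l n l (conjPart l (fun i => (lam i : ℕ)))) := by
  classical
  rw [DualCauchy.grand n l]
  have hfilter : ∑ lam ∈ Fintype.piFinset (fun _ : Fin n => Finset.Iic l),
      rename Sum.inl (DualCauchy.chainF n lam) * rename Sum.inr (DualCauchy.chainG l lam) =
      ∑ lam ∈ (Fintype.piFinset (fun _ : Fin n => Finset.Iic l)).filter DualCauchy.isAnti,
      rename Sum.inl (DualCauchy.chainF n lam) *
        rename Sum.inr (DualCauchy.chainG l lam) := by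
    rw [Finset.sum_filter_of_ne]
    intro lam _ hne
    by_contra hc
    rw [DualCauchy.chainF_not_anti hc, map_zero, zero_mul] at hne
    exact hne rfl
  rw [hfilter]
  refine Finset.sum_nbij'
    (fun g => fun k => (⟨min (g k) l,
      lt_of_le_of_lt (min_le_right _ _) (Nat.lt_succ_self l)⟩ : Fin (l + 1)))
    (fun lam => fun k => (lam k : ℕ)) ?_ ?_ ?_ ?_ ?_
  · intro g hg
    rw [Finset.mem_filter] at hg
    obtain ⟨hgp, hganti⟩ := hg
    rw [Finset.mem_filter]
    refine ⟨Finset.mem_univ _, ?_⟩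
    intro k k' hkk
    show min (g k') l ≤ min (g k) l
    exact min_le_min (hganti k k' hkk) (le_refl l)
  · intro lam hlam
    rw [Finset.mem_filter] at hlam
    rw [Finset.mem_filter, Fintype.mem_piFinset]
    constructor
    · intro k
      exact Finset.mem_Iic.mpr (Nat.lt_succ_iff.mp (lam k).isLt)
    · intro k k' hkk
      exact hlam.2 k k' hkk
  · intro g hg
    rw [Finset.mem_filter] at hg
    rw [Fintype.mem_piFinset] at hg
    funext k
    show min (g k) l = g k
    have := Finset.mem_Iic.mp (hg.1 k)
    omega
  · intro lam _
    funext k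
    apply Fin.ext
    show min ((lam k : ℕ)) l = (lam k : ℕ)
    have := (lam k).isLt
    omega
  · intro g hg
    rw [Finset.mem_filter] at hg
    obtain ⟨hgp, hganti⟩ := hg
    rw [Fintype.mem_piFinset] at hgp
    have hgl : ∀ k, g k ≤ l := fun k => Finset.mem_Iic.mp (hgp k)
    show rename Sum.inl (DualCauchy.chainF n g) * rename Sum.inr (DualCauchy.chainG l g) =
      rename Sum.inl (schurPoly n l n (fun k => min (g k) l)) *
        rename Sum.inr (schurPoly l n l (conjPart l (fun k => min (g k) l)))
    have hfun : (fun k => min (g k) l) = g := by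
      funext k
      have := hgl k
      omega
    rw [hfun]
    rw [DualCauchy.schur_eq_chainF n hganti hgl]
    rw [DualCauchy.schur_eq_chainF l (DualCauchy.conj_anti g)
      (fun j => DualCauchy.conj_le g j)]
    rw [DualCauchy.chainF_conj l g hganti hgl]
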